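/- Let φ : X → ℝ ∪ {∞} be a proper convex function and (x̄, v̄) ∈ gph ∂φ. If φ satisfies the quadratic growth condition at x̄ for v̄, then the kernel of the second subderivative equals the tangent cone to ∂φ*(v̄) at x̄: {w : d²φ(x̄|v̄)(w) = 0} = T_{∂φ*(v̄)}(x̄). -/

import Mathlib

open Filter Topology Metric Set
open scoped RealInnerProductSpace NNReal ENNReal

noncomputable section

/-- Bouligand (contingent) tangent cone. -/
def tanCone {G : Type*} [AddCommGroup G] [Module ℝ G] [TopologicalSpace G]
    (s : Set G) (x : G) : Set G :=
  {w | ∃ (t : ℕ → ℝ) (wk : ℕ → G), (∀ n, 0 < t n) ∧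
    Tendsto t atTop (𝓝 0) ∧ Tendsto wk atTop (𝓝 w) ∧ ∀ n, x + t n • wk n ∈ s}

variable {E F : Type*} [NormedAddCommGroup E] [InnerProductSpace ℝ E]
  [NormedAddCommGroup F] [InnerProductSpace ℝ F]

/-- Graph of a set-valued mapping. -/
def gph (S : E → Set F) : Set (E × F) := {p | p.2 ∈ S p.1}

/-- Graphical derivative. -/
def gder (S : E → Set F) (x : E) (y : F) (w : E) : Set F :=
  {z | (w, z) ∈ tanCone (gph S) (x, y)}

/-- Local closedness of the graph around a point. -/
def LocallyClosedGraph (S : E → Set F) (x : E) (y : F) : Prop :=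
  ∃ U ∈ 𝓝 ((x, y) : E × F), IsClosed (U ∩ gph S)

/-- Metric subregularity of a set-valued mapping at `x` for `y`. -/
def MetrSubreg (S : E → Set F) (x : E) (y : F) : Prop :=
  ∃ κ : ℝ≥0, ∃ ε : ℝ, 0 < ε ∧ ∀ x' ∈ ball x ε,
    EMetric.infEdist x' {u | y ∈ S u} ≤ (κ : ℝ≥0∞) * EMetric.infEdist y (S x')

/-- Convex subdifferential of an extended-real-valued function. -/
def subdiff (φ : E → EReal) (x : E) : Set E :=
  {v | ∀ u, φ x + ((⟪v, u - x⟫ : ℝ) : EReal) ≤ φ u}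

/-- Properness. -/
def ProperFn (φ : E → EReal) : Prop := (∀ x, φ x ≠ ⊥) ∧ ∃ x, φ x ≠ ⊤

/-- Convexity via the epigraph. -/
def ConvexFn (φ : E → EReal) : Prop := Convex ℝ {p : E × ℝ | φ p.1 ≤ (p.2 : EReal)}

/-- Fenchel conjugate. -/
def conjFn (φ : E → EReal) (v : E) : EReal := ⨆ x, ((⟪v, x⟫ : ℝ) : EReal) - φ x

/-- Second subderivative. -/
def secondSubderiv (φ : E → EReal) (x v w : E) : EReal :=
  Filter.liminf (fun p : ℝ × E =>
    (((2 / p.1 ^ 2 : ℝ)) : EReal) *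
      (φ (x + p.1 • p.2) - φ x - ((p.1 * ⟪v, p.2⟫ : ℝ) : EReal)))
    ((𝓝[>] (0 : ℝ)) ×ˢ 𝓝 w)

/-- Quadratic growth condition at `x` for `v`. -/
def QuadGrowth (φ : E → EReal) (x v : E) : Prop :=
  ∃ c : ℝ, 0 < c ∧ ∃ ε : ℝ, 0 < ε ∧ ∀ u ∈ ball x ε,
    φ x + ((⟪v, u - x⟫ + c / 2 * (infDist u {u' | v ∈ subdiff φ u'}) ^ 2 : ℝ) : EReal) ≤ φ u


section Aux

variable {E : Type*} [NormedAddCommGroup E] [InnerProductSpace ℝ E]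
variable {φ : E → EReal} {xb vb : E} {a : ℝ}

lemma phi_ne_bot (hsub : vb ∈ subdiff φ xb) (ha : φ xb = (a : EReal)) (u : E) :
    φ u ≠ ⊥ := by
  have h := hsub u
  rw [ha] at h
  intro hbot
  rw [hbot] at h
  have : ((a + ⟪vb, u - xb⟫ : ℝ) : EReal) ≤ ⊥ := by
    rw [EReal.coe_add] at *; exact h
  simp at this

lemma phi_xb_ne_top (hproper : ProperFn φ) (hsub : vb ∈ subdiff φ xb) : φ xb ≠ ⊤ := by
  obtain ⟨x0, hx0⟩ := hproper.2
  intro htop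
  have h := hsub x0
  rw [htop, EReal.top_add_coe] at h
  exact hx0 (top_le_iff.1 h)

/-- Characterization of `S = (∂φ)⁻¹(vb)`. -/
lemma S_char (hsub : vb ∈ subdiff φ xb) (ha : φ xb = (a : EReal)) (u : E) :
    vb ∈ subdiff φ u ↔ φ u = ((a + ⟪vb, u - xb⟫ : ℝ) : EReal) := by
  constructor
  · intro h
    have h1 := h xb
    have h2 := hsub u
    rw [ha] at h1 h2
    have hnb : φ u ≠ ⊥ := phi_ne_bot hsub ha u
    have hnt : φ u ≠ ⊤ := by
      intro ht
      rw [ht, EReal.top_add_coe] at h1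
      exact EReal.coe_ne_top a (top_le_iff.1 h1)
    lift φ u to ℝ using ⟨hnt, hnb⟩ with b hb
    norm_cast at h1 h2 ⊢
    have : ⟪vb, xb - u⟫ = -⟪vb, u - xb⟫ := by
      rw [← inner_neg_right, neg_sub]
    linarith [h1, h2, this.symm ▸ h1]
  · intro h x
    have h2 := hsub x
    rw [ha] at h2
    rw [h]
    calc ((a + ⟪vb, u - xb⟫ : ℝ) : EReal) + ((⟪vb, x - u⟫ : ℝ) : EReal)
        = ((a + ⟪vb, x - xb⟫ : ℝ) : EReal) := by
          norm_cast
          have : ⟪vb, u - xb⟫ + ⟪vb, x - u⟫ = ⟪vb, x - xb⟫ := by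
            rw [← inner_add_right]
            congr 1
            abel
          linarith
      _ ≤ φ x := h2

end Aux

section Aux2

variable {E : Type*} [NormedAddCommGroup E] [InnerProductSpace ℝ E]
variable {φ : E → EReal} {xb vb : E} {a : ℝ}

/-- Value of the conjugate at `vb`. -/
lemma conj_at (hsub : vb ∈ subdiff φ xb) (ha : φ xb = (a : EReal)) :
    conjFn φ vb = ((⟪vb, xb⟫ - a : ℝ) : EReal) := by
  apply le_antisymm
  · apply iSup_le
    intro x
    have h2 := hsub x
    rw [ha] at h2
    rcases eq_or_ne (φ x) ⊤ with ht | ht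
    · rw [ht, EReal.sub_top]; exact bot_le
    · have hnb : φ x ≠ ⊥ := phi_ne_bot hsub ha x
      lift φ x to ℝ using ⟨ht, hnb⟩ with b hb
      norm_cast at h2 ⊢
      have : ⟪vb, x - xb⟫ = ⟪vb, x⟫ - ⟪vb, xb⟫ := inner_sub_right vb x xb
      linarith
  · have := le_iSup (fun x => ((⟪vb, x⟫ : ℝ) : EReal) - φ x) xb
    rw [ha] at this
    exact_mod_cast this

/-- `S ⊆ ∂φ*(vb)`. -/
lemma S_subset_S' (hsub : vb ∈ subdiff φ xb) (ha : φ xb = (a : EReal)) :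
    {u | vb ∈ subdiff φ u} ⊆ subdiff (conjFn φ) vb := by
  intro u hu v
  have hu' : φ u = ((a + ⟪vb, u - xb⟫ : ℝ) : EReal) := (S_char hsub ha u).1 hu
  rw [conj_at hsub ha]
  show _ ≤ ⨆ x, ((⟪v, x⟫ : ℝ) : EReal) - φ x
  refine le_trans ?_ (le_iSup _ u)
  rw [hu']
  norm_cast
  have h1 : ⟪u, v - vb⟫ = ⟪u, v⟫ - ⟪u, vb⟫ := inner_sub_right u v vb
  have h2 : ⟪vb, u - xb⟫ = ⟪vb, u⟫ - ⟪vb, xb⟫ := inner_sub_right vb u xb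
  have h3 : ⟪u, v⟫ = ⟪v, u⟫ := real_inner_comm v u
  have h4 : ⟪u, vb⟫ = ⟪vb, u⟫ := real_inner_comm vb u
  linarith

end Aux2
section Aux3

variable {E : Type*} [NormedAddCommGroup E] [InnerProductSpace ℝ E]
variable {φ : E → EReal} {xb vb : E} {a : ℝ}

lemma lower_bound_pt (hsub : vb ∈ subdiff φ xb) (ha : φ xb = (a : EReal)) (t : ℝ) (w' : E) :
    ((a + t * ⟪vb, w'⟫ : ℝ) : EReal) ≤ φ (xb + t • w') := by
  have h := hsub (xb + t • w')
  rw [ha] at h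
  have : ⟪vb, xb + t • w' - xb⟫ = t * ⟪vb, w'⟫ := by
    rw [add_sub_cancel_left, real_inner_smul_right]
  rw [this] at h
  exact_mod_cast h

/-- The second subderivative is nonnegative when `vb ∈ ∂φ(xb)`. -/
lemma ssd_nonneg (hsub : vb ∈ subdiff φ xb) (ha : φ xb = (a : EReal)) (w : E) :
    0 ≤ secondSubderiv φ xb vb w := by
  refine Filter.le_liminf_of_le (by isBoundedDefault) ?_
  have hev : ∀ᶠ p : ℝ × E in (𝓝[>] (0 : ℝ)) ×ˢ 𝓝 w, 0 < p.1 :=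
    Filter.Eventually.prod_inl (self_mem_nhdsWithin) _
  filter_upwards [hev] with p hp
  obtain ⟨t, w'⟩ := p
  simp only at hp ⊢
  have hlb := lower_bound_pt hsub ha t w'
  rw [ha]
  have hfac : (0:ℝ) < 2 / t ^ 2 := by positivity
  rcases eq_or_ne (φ (xb + t • w')) ⊤ with ht | ht
  · rw [ht, EReal.top_sub_coe, EReal.top_sub_coe, EReal.coe_mul_top_of_pos hfac]
    exact le_top
  · have hnb : φ (xb + t • w') ≠ ⊥ := phi_ne_bot hsub ha _
    lift φ (xb + t • w') to ℝ using ⟨ht, hnb⟩ with b hb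
    rw [show ((b:EReal) - (a:ℝ) - ((t * ⟪vb, w'⟫ : ℝ):EReal)) = ((b - a - t * ⟪vb, w'⟫ : ℝ) : EReal) by norm_cast]
    rw [← EReal.coe_mul]
    have : (0:ℝ) ≤ 2 / t ^ 2 * (b - a - t * ⟪vb, w'⟫) := by
      have : a + t * ⟪vb, w'⟫ ≤ b := by exact_mod_cast hlb
      have h2 : 0 ≤ b - a - t * ⟪vb, w'⟫ := by linarith
      positivity
    exact_mod_cast this

/-- Along points of `S`, the difference quotient vanishes. -/
lemma quot_zero (hsub : vb ∈ subdiff φ xb) (ha : φ xb = (a : EReal)) {t : ℝ} {w' : E}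
    (hu : vb ∈ subdiff φ (xb + t • w')) :
    (((2 / t ^ 2 : ℝ)) : EReal) *
      (φ (xb + t • w') - φ xb - ((t * ⟪vb, w'⟫ : ℝ) : EReal)) = 0 := by
  have hval : φ (xb + t • w') = ((a + ⟪vb, xb + t • w' - xb⟫ : ℝ) : EReal) :=
    (S_char hsub ha _).1 hu
  have hi : ⟪vb, xb + t • w' - xb⟫ = t * ⟪vb, w'⟫ := by
    rw [add_sub_cancel_left, real_inner_smul_right]
  rw [hval, hi, ha]
  rw [show (((a + t * ⟪vb, w'⟫ : ℝ) : EReal) - (a:ℝ) - ((t * ⟪vb, w'⟫ : ℝ):EReal)) = ((0:ℝ) : EReal) by norm_cast; ring]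
  simp

/-- Membership in the tangent cone to `S` forces the second subderivative to vanish. -/
lemma tanCone_S_subset_ker (hsub : vb ∈ subdiff φ xb) (ha : φ xb = (a : EReal)) {w : E}
    (hw : w ∈ tanCone {u | vb ∈ subdiff φ u} xb) :
    secondSubderiv φ xb vb w = 0 := by
  obtain ⟨t, wk, ht0, ht, hwk, hmem⟩ := hw
  refine le_antisymm ?_ (ssd_nonneg hsub ha w)
  refine Filter.liminf_le_of_frequently_le ?_ (by isBoundedDefault)
  have htt : Tendsto (fun k => ((t k, wk k) : ℝ × E)) atTop ((𝓝[>] (0 : ℝ)) ×ˢ 𝓝 w) := by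
    refine Filter.Tendsto.prodMk ?_ hwk
    exact tendsto_nhdsWithin_iff.2 ⟨ht, Filter.Eventually.of_forall ht0⟩
  apply htt.frequently
  apply Filter.Frequently.of_forall
  intro k
  exact le_of_eq (quot_zero hsub ha (hmem k))

end Aux3
section Aux4

variable {E : Type*} [NormedAddCommGroup E] [InnerProductSpace ℝ E] [FiniteDimensional ℝ E]
variable {φ : E → EReal} {xb vb : E} {a : ℝ}

/-- Under quadratic growth, nearby points of `∂φ*(vb)` lie in the closure of
`S = (∂φ)⁻¹(vb)`. -/
lemma mem_closure_S (hsub : vb ∈ subdiff φ xb) (ha : φ xb = (a : EReal))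
    (hconv : ConvexFn φ) {c ε : ℝ} (hc : 0 < c) (hε : 0 < ε)
    (hqg : ∀ u ∈ ball xb ε,
      φ xb + ((⟪vb, u - xb⟫ + c / 2 * (infDist u {u' | vb ∈ subdiff φ u'}) ^ 2 : ℝ) : EReal) ≤ φ u)
    {x : E} (hx : x ∈ subdiff (conjFn φ) vb) (hdx : dist x xb < ε) :
    x ∈ closure {u | vb ∈ subdiff φ u} := by
  by_contra hcl
  set S := {u' | vb ∈ subdiff φ u'} with hS
  have hSne : S.Nonempty := ⟨xb, hsub⟩
  have hρ : 0 < infDist x S := by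
    rcases lt_or_eq_of_le (infDist_nonneg (x := x) (s := S)) with h | h
    · exact h
    · exact absurd ((mem_closure_iff_infDist_zero hSne).2 h.symm) hcl
  set ρ := infDist x S with hρdef
  set ℓx : ℝ := a + ⟪vb, x - xb⟫ with hℓx
  have hεd : 0 < ε - dist x xb := by linarith
  set r : ℝ := min (min (ρ/2) ((ε - dist x xb)/2)) (c*ρ^2/(16*(‖vb‖+1))) with hrdef
  have hvb1 : (0:ℝ) < ‖vb‖ + 1 := by positivity
  have hr : 0 < r := lt_min (lt_min (by positivity) (by positivity)) (by positivity)
  set δ : ℝ := min r (c*ρ^2/16) with hδdef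
  have hδ : 0 < δ := lt_min hr (by positivity)
  set epi := {p : E × ℝ | φ p.1 ≤ ((p.2 : ℝ) : EReal)} with hepi
  have hsep : ∀ p ∈ epi, δ ≤ dist ((x, ℓx) : E × ℝ) p := by
    rintro ⟨u, α⟩ hp
    rcases le_or_gt r (dist x u) with h | h
    · calc δ ≤ r := min_le_left _ _
        _ ≤ dist x u := h
        _ ≤ dist ((x, ℓx) : E × ℝ) (u, α) := by
            rw [Prod.dist_eq]; exact le_max_left _ _
    · have hu_ball : u ∈ ball xb ε := by
        rw [mem_ball]
        have h1 : dist u xb ≤ dist u x + dist x xb := dist_triangle u x xb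
        have h2 : dist u x = dist x u := dist_comm u x
        have h3 : r ≤ (ε - dist x xb)/2 := le_trans (min_le_left _ _) (min_le_right _ _)
        linarith
      have hQ := hqg u hu_ball
      rw [ha] at hQ
      have hα : φ u ≤ ((α : ℝ) : EReal) := hp
      have hreal : a + (⟪vb, u - xb⟫ + c/2 * (infDist u S)^2) ≤ α := by
        have h4 := le_trans hQ hα
        exact_mod_cast h4
      have hd_u : ρ/2 ≤ infDist u S := by
        have h5 : infDist x S ≤ infDist u S + dist x u :=
          infDist_le_infDist_add_dist
        have h6 : r ≤ ρ/2 := le_trans (min_le_left _ _) (min_le_left _ _)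
        have := hρdef
        linarith
      have hCS : |⟪vb, u - x⟫| ≤ ‖vb‖ * ‖u - x‖ := abs_real_inner_le_norm _ _
      have hnx : ‖u - x‖ < r := by
        rw [← dist_eq_norm, dist_comm]; exact h
      have hvbr : ‖vb‖ * r ≤ c*ρ^2/16 := by
        have h7 : r ≤ c*ρ^2/(16*(‖vb‖+1)) := min_le_right _ _
        have h8 : ‖vb‖ * r ≤ ‖vb‖ * (c*ρ^2/(16*(‖vb‖+1))) :=
          mul_le_mul_of_nonneg_left h7 (norm_nonneg _)
        have h9 : ‖vb‖ * (c*ρ^2/(16*(‖vb‖+1))) ≤ (‖vb‖+1) * (c*ρ^2/(16*(‖vb‖+1))) := by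
          have : (0:ℝ) ≤ c*ρ^2/(16*(‖vb‖+1)) := by positivity
          nlinarith
        have h10 : (‖vb‖+1) * (c*ρ^2/(16*(‖vb‖+1))) = c*ρ^2/16 := by
          field_simp
        linarith
      have hinner : ⟪vb, x - xb⟫ - c*ρ^2/16 ≤ ⟪vb, u - xb⟫ := by
        have h11 : ⟪vb, u - xb⟫ = ⟪vb, x - xb⟫ + ⟪vb, u - x⟫ := by
          rw [← inner_add_right]
          congr 1
          abel
        have h12 : -(‖vb‖ * ‖u - x‖) ≤ ⟪vb, u - x⟫ := neg_le_of_abs_le hCS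
        have h13 : ‖vb‖ * ‖u - x‖ ≤ ‖vb‖ * r :=
          mul_le_mul_of_nonneg_left hnx.le (norm_nonneg _)
        linarith
      have hsq : c/2 * (ρ/2)^2 ≤ c/2 * (infDist u S)^2 := by
        have h0 : (0:ℝ) ≤ ρ/2 := by linarith
        have := pow_le_pow_left₀ h0 hd_u 2
        nlinarith
      have hαb : ℓx + δ ≤ α := by
        have h14 : δ ≤ c*ρ^2/16 := min_le_right _ _
        have h15 : c/2 * (ρ/2)^2 = c*ρ^2/8 := by ring
        rw [hℓx]
        linarith
      calc δ ≤ |ℓx - α| := by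
            rw [abs_sub_comm, abs_of_nonneg (by linarith : (0:ℝ) ≤ α - ℓx)]
            linarith
        _ = dist ℓx α := (Real.dist_eq ℓx α).symm
        _ ≤ dist ((x, ℓx) : E × ℝ) (u, α) := by
            rw [Prod.dist_eq]; exact le_max_right _ _
  have hnotin : ((x, ℓx) : E × ℝ) ∉ closure epi := by
    intro hmem
    obtain ⟨p, hp, hlt⟩ := Metric.mem_closure_iff.1 hmem δ hδ
    exact absurd (hsep p hp) (not_le.2 hlt)
  have hconv' : Convex ℝ epi := hconv
  obtain ⟨f, u', hfu, hux⟩ :=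
    geometric_hahn_banach_closed_point hconv'.closure isClosed_closure hnotin
  set z : E := (InnerProductSpace.toDual ℝ E).symm
      (f.comp (ContinuousLinearMap.inl ℝ E ℝ)) with hzdef
  have hz : ∀ q : E, ⟪z, q⟫ = f (q, 0) := by
    intro q
    rw [hzdef, InnerProductSpace.toDual_symm_apply]
    rfl
  set s0 : ℝ := f (0, 1) with hs0def
  have hf_split : ∀ (q : E) (α : ℝ), f (q, α) = f (q, 0) + α * s0 := by
    intro q α
    have hqα : ((q, α) : E × ℝ) = (q, 0) + α • ((0 : E), (1:ℝ)) := by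
      simp [Prod.ext_iff]
    rw [hqα, map_add, map_smul, smul_eq_mul]
  have hepi_lt : ∀ p ∈ epi, f p < u' := fun p hp => hfu p (subset_closure hp)
  have hs0 : s0 ≤ 0 := by
    by_contra hpos
    push_neg at hpos
    obtain ⟨n, hn⟩ := exists_nat_gt ((u' - f (xb, 0))/s0 - a)
    have hmem : ((xb, a + n) : E × ℝ) ∈ epi := by
      show φ xb ≤ (((a + n : ℝ)) : EReal)
      rw [ha]
      exact_mod_cast le_add_of_nonneg_right (Nat.cast_nonneg n)
    have h16 := hepi_lt _ hmem
    rw [hf_split] at h16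
    have h17 : ((u' - f (xb, 0))/s0) * s0 = u' - f (xb, 0) := by
      field_simp
    nlinarith
  have hℓx_lt : u' < f (x, 0) + ℓx * s0 := by
    rw [← hf_split]; exact hux
  rcases eq_or_lt_of_le hs0 with hs0' | hs0'
  · -- case s0 = 0
    have hdom : ∀ q : E, ((⟪vb + z, q⟫ : ℝ) : EReal) - φ q ≤ ((⟪vb, xb⟫ - a + u' : ℝ) : EReal) := by
      intro q
      rcases eq_or_ne (φ q) ⊤ with h | h
      · rw [h, EReal.sub_top]; exact bot_le
      · lift φ q to ℝ using ⟨h, phi_ne_bot hsub ha q⟩ with b hb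
        have h1 : ((a : ℝ) : EReal) + ((⟪vb, q - xb⟫ : ℝ) : EReal) ≤ ((b:ℝ) : EReal) := by
          have := hsub q
          rw [ha, ← hb] at this
          exact this
        have h1' : a + ⟪vb, q - xb⟫ ≤ b := by exact_mod_cast h1
        have h2 : f (q, 0) < u' := by
          have hmem : ((q, b) : E × ℝ) ∈ epi := by
            show φ q ≤ ((b : ℝ) : EReal)
            rw [← hb]
          have h18 := hepi_lt _ hmem
          rw [hf_split, hs0', mul_zero, add_zero] at h18
          exact h18
        have h3 : ⟪z, q⟫ = f (q, 0) := hz q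
        have h4 : ⟪vb + z, q⟫ = ⟪vb, q⟫ + ⟪z, q⟫ := inner_add_left vb z q
        have h5 : ⟪vb, q - xb⟫ = ⟪vb, q⟫ - ⟪vb, xb⟫ := inner_sub_right vb q xb
        norm_cast
        linarith
    have hconj_le : conjFn φ (vb + z) ≤ ((⟪vb, xb⟫ - a + u' : ℝ) : EReal) := iSup_le hdom
    have hxv := hx (vb + z)
    rw [conj_at hsub ha] at hxv
    have h6 := le_trans hxv hconj_le
    have hxz : ⟪x, (vb + z) - vb⟫ = ⟪x, z⟫ := by rw [add_sub_cancel_left]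
    rw [hxz] at h6
    have hle : ⟪vb, xb⟫ - a + ⟪x, z⟫ ≤ ⟪vb, xb⟫ - a + u' := by exact_mod_cast h6
    have h7 : ⟪z, x⟫ = f (x, 0) := hz x
    have h8 : ⟪x, z⟫ = ⟪z, x⟫ := real_inner_comm z x
    rw [hs0', mul_zero, add_zero] at hℓx_lt
    linarith
  · -- case s0 < 0
    set m : ℝ := -1/s0 with hm
    have hm0 : 0 < m := div_pos_iff.2 (Or.inr ⟨by norm_num, hs0'⟩)
    have hsm : s0 * m = -1 := by
      rw [hm]; field_simp [hs0'.ne]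
    have hminor : ∀ q : E, ((⟪m • z, q⟫ : ℝ) : EReal) - φ q ≤ ((m * u' : ℝ) : EReal) := by
      intro q
      rcases eq_or_ne (φ q) ⊤ with h | h
      · rw [h, EReal.sub_top]; exact bot_le
      · lift φ q to ℝ using ⟨h, phi_ne_bot hsub ha q⟩ with b hb
        have hmem : ((q, b) : E × ℝ) ∈ epi := by
          show φ q ≤ ((b : ℝ) : EReal)
          rw [← hb]
        have h18 := hepi_lt _ hmem
        rw [hf_split] at h18
        have h19 : ⟪z, q⟫ = f (q, 0) := hz q
        have h20 : ⟪m • z, q⟫ = m * ⟪z, q⟫ := real_inner_smul_left z q m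
        norm_cast
        -- from f(q,0) + b*s0 < u' : m*f(q,0) + b*s0*m < m*u', s0*m = -1
        have h21 : m * (f (q,0) + b * s0) < m * u' := mul_lt_mul_of_pos_left h18 hm0
        have h22 : m * (f (q, 0) + b * s0) = m * f (q, 0) - b := by
          rw [mul_add, show m * (b * s0) = b * (s0 * m) by ring, hsm]; ring
        have h23 : m * inner ℝ z q = m * f (q, 0) := by rw [h19]
        linarith
    have hconj_le : conjFn φ (m • z) ≤ ((m * u' : ℝ) : EReal) := iSup_le hminor
    have hxv := hx (m • z)
    rw [conj_at hsub ha] at hxv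
    have h6 := le_trans hxv hconj_le
    have hle : ⟪vb, xb⟫ - a + ⟪x, m • z - vb⟫ ≤ m * u' := by exact_mod_cast h6
    have h22 : ⟪x, m • z - vb⟫ = m * ⟪x, z⟫ - ⟪x, vb⟫ := by
      rw [inner_sub_right, real_inner_smul_right]
    have h23 : m * u' < m * (f (x, 0) + ℓx * s0) := mul_lt_mul_of_pos_left hℓx_lt hm0
    have h7 : ⟪z, x⟫ = f (x, 0) := hz x
    have h8 : ⟪x, z⟫ = ⟪z, x⟫ := real_inner_comm z x
    have h9 : ⟪x, vb⟫ = ⟪vb, x⟫ := real_inner_comm vb x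
    have h10 : ⟪vb, x - xb⟫ = ⟪vb, x⟫ - ⟪vb, xb⟫ := inner_sub_right vb x xb
    rw [hℓx] at h23
    have h24 : m * (f (x,0) + (a + ⟪vb, x - xb⟫) * s0)
        = m * f (x,0) - (a + ⟪vb, x - xb⟫) := by
      rw [mul_add, show m * ((a + ⟪vb, x - xb⟫) * s0) = (a + ⟪vb, x - xb⟫) * (s0 * m) by ring,
        hsm]; ring
    have h25 : m * ⟪x, z⟫ = m * f (x, 0) := by rw [h8, h7]
    linarith
end Aux4
section Aux5

variable {E : Type*} [NormedAddCommGroup E] [InnerProductSpace ℝ E]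
variable {φ : E → EReal} {xb vb : E} {a : ℝ}

lemma tanCone_mono {s s' : Set E} (h : s ⊆ s') (x : E) : tanCone s x ⊆ tanCone s' x := by
  rintro w ⟨t, wk, ht0, ht, hwk, hmem⟩
  exact ⟨t, wk, ht0, ht, hwk, fun n => h (hmem n)⟩

/-- From vanishing second subderivative to the tangent cone of `S`. -/
lemma ker_to_tan (hsub : vb ∈ subdiff φ xb) (ha : φ xb = (a : EReal))
    {c ε : ℝ} (hc : 0 < c) (hε : 0 < ε)
    (hqg : ∀ u ∈ ball xb ε,
      φ xb + ((⟪vb, u - xb⟫ + c / 2 * (infDist u {u' | vb ∈ subdiff φ u'}) ^ 2 : ℝ) : EReal) ≤ φ u)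
    {w : E} (hw : secondSubderiv φ xb vb w = 0) :
    w ∈ tanCone {u' | vb ∈ subdiff φ u'} xb := by
  set S := {u' | vb ∈ subdiff φ u'} with hS
  have hSne : S.Nonempty := ⟨xb, hsub⟩
  have key : ∀ k : ℕ, ∃ (t' : ℝ) (w' : E),
      (0 < t' ∧ t' < 1/((k:ℝ)+1) ∧ dist w' w < 1/((k:ℝ)+1) ∧ dist (xb + t' • w') xb < ε) ∧
      (((2 / t' ^ 2 : ℝ)) : EReal) *
        (φ (xb + t' • w') - φ xb - ((t' * ⟪vb, w'⟫ : ℝ) : EReal)) < ((1/((k:ℝ)+1) : ℝ) : EReal) := by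
    intro k
    have hek : (0:ℝ) < 1/((k:ℝ)+1) := by positivity
    have hlim : Filter.liminf (fun p : ℝ × E =>
        (((2 / p.1 ^ 2 : ℝ)) : EReal) *
          (φ (xb + p.1 • p.2) - φ xb - ((p.1 * ⟪vb, p.2⟫ : ℝ) : EReal)))
        ((𝓝[>] (0 : ℝ)) ×ˢ 𝓝 w) < ((1/((k:ℝ)+1) : ℝ) : EReal) := by
      have : secondSubderiv φ xb vb w < ((1/((k:ℝ)+1) : ℝ) : EReal) := by
        rw [hw]; exact_mod_cast hek
      exact this
    have hfreq := Filter.frequently_lt_of_liminf_lt (by isBoundedDefault) hlim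
    have hev1' : ∀ᶠ t' : ℝ in 𝓝[>] (0:ℝ), 0 < t' ∧ t' < 1/((k:ℝ)+1) := by
      filter_upwards [self_mem_nhdsWithin,
        eventually_nhdsWithin_of_eventually_nhds (eventually_lt_nhds hek)] with t h1 h2
      exact ⟨h1, h2⟩
    have hev1 : ∀ᶠ p : ℝ × E in (𝓝[>] (0 : ℝ)) ×ˢ 𝓝 w, 0 < p.1 ∧ p.1 < 1/((k:ℝ)+1) :=
      hev1'.prod_inl _
    have hev2 : ∀ᶠ p : ℝ × E in (𝓝[>] (0 : ℝ)) ×ˢ 𝓝 w, dist p.2 w < 1/((k:ℝ)+1) :=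
      Filter.Eventually.prod_inr
        (Filter.eventually_of_mem (Metric.ball_mem_nhds w hek) (fun y hy => mem_ball.1 hy)) _
    have hev3 : ∀ᶠ p : ℝ × E in (𝓝[>] (0 : ℝ)) ×ˢ 𝓝 w, dist (xb + p.1 • p.2) xb < ε := by
      have hc1 : Continuous (fun p : ℝ × E => xb + p.1 • p.2) := by fun_prop
      have hcont : Tendsto (fun p : ℝ × E => xb + p.1 • p.2) (𝓝 ((0:ℝ), w)) (𝓝 xb) := by
        have h := hc1.tendsto ((0:ℝ), w)
        simpa using h
      have htend : Tendsto (fun p : ℝ × E => xb + p.1 • p.2)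
          ((𝓝[>] (0 : ℝ)) ×ˢ 𝓝 w) (𝓝 xb) := by
        refine hcont.mono_left ?_
        calc (𝓝[>] (0 : ℝ)) ×ˢ 𝓝 w ≤ 𝓝 (0:ℝ) ×ˢ 𝓝 w :=
              Filter.prod_mono nhdsWithin_le_nhds le_rfl
          _ = 𝓝 ((0:ℝ), w) := nhds_prod_eq.symm
      exact htend.eventually
        (Filter.eventually_of_mem (Metric.ball_mem_nhds xb hε) (fun y hy => mem_ball.1 hy))
    obtain ⟨p, hQp, ⟨h1, h2⟩, h3⟩ := (hfreq.and_eventually ((hev1.and hev2).and hev3)).exists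
    exact ⟨p.1, p.2, ⟨h1.1, h1.2, h2, h3⟩, hQp⟩
  choose t wk hprop hQ using key
  have htk : ∀ k, 0 < t k := fun k => (hprop k).1
  have ht1 : ∀ k, t k < 1/((k:ℝ)+1) := fun k => (hprop k).2.1
  have hwd : ∀ k, dist (wk k) w < 1/((k:ℝ)+1) := fun k => (hprop k).2.2.1
  have hball : ∀ k, xb + t k • wk k ∈ ball xb ε := fun k => mem_ball.2 (hprop k).2.2.2
  -- extract real quantitative bounds
  have hkey : ∀ k, ∃ u ∈ S, dist (xb + t k • wk k) u <
      t k * (Real.sqrt ((1/((k:ℝ)+1))/c) + 1/((k:ℝ)+1)) := by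
    intro k
    have hek : (0:ℝ) < 1/((k:ℝ)+1) := by positivity
    have hlb := lower_bound_pt hsub ha (t k) (wk k)
    have hfac : (0:ℝ) < 2 / (t k) ^ 2 := div_pos two_pos (pow_pos (htk k) 2)
    have hQk := hQ k
    rw [ha] at hQk
    have hnt : φ (xb + t k • wk k) ≠ ⊤ := by
      intro htop
      rw [htop, EReal.top_sub_coe, EReal.top_sub_coe,
        EReal.coe_mul_top_of_pos hfac] at hQk
      exact not_top_lt hQk
    have hnb : φ (xb + t k • wk k) ≠ ⊥ := phi_ne_bot hsub ha _
    obtain ⟨b, hb⟩ : ∃ b : ℝ, φ (xb + t k • wk k) = (b : EReal) :=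
      ⟨(φ (xb + t k • wk k)).toReal, (EReal.coe_toReal hnt hnb).symm⟩
    rw [hb] at hQk hlb
    have hab : a + t k * ⟪vb, wk k⟫ ≤ b := by exact_mod_cast hlb
    have hQr : 2 / (t k) ^ 2 * (b - a - t k * ⟪vb, wk k⟫) < 1/((k:ℝ)+1) := by
      have : ((b:ℝ) : EReal) - ((a:ℝ) : EReal) - ((t k * ⟪vb, wk k⟫ : ℝ) : EReal)
          = ((b - a - t k * ⟪vb, wk k⟫ : ℝ) : EReal) := by norm_cast
      rw [this, ← EReal.coe_mul] at hQk
      exact_mod_cast hQk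
    have hq := hqg (xb + t k • wk k) (hball k)
    rw [ha, hb] at hq
    have hinner : ⟪vb, xb + t k • wk k - xb⟫ = t k * ⟪vb, wk k⟫ := by
      rw [add_sub_cancel_left, real_inner_smul_right]
    have hqr : a + (t k * ⟪vb, wk k⟫ + c/2 * (infDist (xb + t k • wk k) S)^2) ≤ b := by
      rw [hinner] at hq
      exact_mod_cast hq
    have ht2 : (0:ℝ) < (t k)^2 := pow_pos (htk k) 2
    have h31 := mul_lt_mul_of_pos_left hQr (show (0:ℝ) < (t k)^2/2 by positivity)
    have h32 : (t k)^2/2 * (2/(t k)^2 * (b - a - t k * ⟪vb, wk k⟫))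
        = b - a - t k * ⟪vb, wk k⟫ := by
        rw [← mul_assoc, div_mul_div_comm, mul_comm ((t k)^2) 2,
          div_self (show (2:ℝ) * (t k)^2 ≠ 0 by positivity), one_mul]
    have hd2 : c/2 * (infDist (xb + t k • wk k) S)^2 < (1/((k:ℝ)+1)) * (t k)^2 / 2 := by
      nlinarith [h31, h32]
    have hdt : infDist (xb + t k • wk k) S / t k < Real.sqrt ((1/((k:ℝ)+1))/c) := by
      rw [Real.lt_sqrt (div_nonneg infDist_nonneg (htk k).le)]
      rw [div_pow]
      rw [div_lt_div_iff₀ ht2 hc]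
      nlinarith [infDist_nonneg (x := xb + t k • wk k) (s := S)]
    have hlt : infDist (xb + t k • wk k) S < t k * Real.sqrt ((1/((k:ℝ)+1))/c) := by
      have h30 := (div_lt_iff₀ (htk k)).1 hdt
      linarith [h30]
    have : infDist (xb + t k • wk k) S < t k * (Real.sqrt ((1/((k:ℝ)+1))/c) + 1/((k:ℝ)+1)) := by
      have hpos : 0 < t k * (1/((k:ℝ)+1)) := mul_pos (htk k) hek
      nlinarith
    exact (infDist_lt_iff hSne).1 this
  choose u huS hud using hkey
  refine ⟨t, fun k => (t k)⁻¹ • (u k - xb), htk, ?_, ?_, ?_⟩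
  · exact squeeze_zero (fun k => (htk k).le) (fun k => (ht1 k).le)
      tendsto_one_div_add_atTop_nhds_zero_nat
  · -- convergence of the modified directions
    have hdist : ∀ k, dist ((t k)⁻¹ • (u k - xb)) (wk k) <
        Real.sqrt ((1/((k:ℝ)+1))/c) + 1/((k:ℝ)+1) := by
      intro k
      have hne : t k ≠ 0 := (htk k).ne'
      have hsm : (t k) • ((t k)⁻¹ • (u k - xb) - wk k) = u k - (xb + t k • wk k) := by
        rw [smul_sub, smul_inv_smul₀ hne]; abel
      have h5 : t k * ‖(t k)⁻¹ • (u k - xb) - wk k‖ = ‖xb + t k • wk k - u k‖ := by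
        calc t k * ‖(t k)⁻¹ • (u k - xb) - wk k‖
            = ‖(t k) • ((t k)⁻¹ • (u k - xb) - wk k)‖ := by
              rw [norm_smul, Real.norm_eq_abs, abs_of_pos (htk k)]
          _ = ‖u k - (xb + t k • wk k)‖ := by rw [hsm]
          _ = ‖xb + t k • wk k - u k‖ := norm_sub_rev _ _
      have hnorm : dist ((t k)⁻¹ • (u k - xb)) (wk k)
          = dist (xb + t k • wk k) (u k) / t k := by
        rw [dist_eq_norm, dist_eq_norm, eq_div_iff hne, mul_comm]
        exact h5
      rw [hnorm, div_lt_iff₀ (htk k)]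
      calc dist (xb + t k • wk k) (u k)
          < t k * (Real.sqrt ((1/((k:ℝ)+1))/c) + 1/((k:ℝ)+1)) := hud k
        _ = (Real.sqrt ((1/((k:ℝ)+1))/c) + 1/((k:ℝ)+1)) * t k := by ring
    rw [tendsto_iff_dist_tendsto_zero]
    have hB : Tendsto (fun k : ℕ => (Real.sqrt ((1/((k:ℝ)+1))/c) + 1/((k:ℝ)+1)) + 1/((k:ℝ)+1))
        atTop (𝓝 0) := by
      have h1 : Tendsto (fun k : ℕ => 1/((k:ℝ)+1)) atTop (𝓝 0) :=
        tendsto_one_div_add_atTop_nhds_zero_nat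
      have h2 : Tendsto (fun k : ℕ => Real.sqrt ((1/((k:ℝ)+1))/c)) atTop (𝓝 0) := by
        have h3 : Tendsto (fun k : ℕ => (1/((k:ℝ)+1))/c) atTop (𝓝 0) := by
          simpa using h1.div_const c
        have h4 := (Real.continuous_sqrt.tendsto' 0 0 Real.sqrt_zero).comp h3
        exact h4
      simpa using (h2.add h1).add h1
    refine squeeze_zero (fun k => dist_nonneg) (fun k => ?_) hB
    calc dist ((t k)⁻¹ • (u k - xb)) w
        ≤ dist ((t k)⁻¹ • (u k - xb)) (wk k) + dist (wk k) w := dist_triangle _ _ _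
      _ ≤ (Real.sqrt ((1/((k:ℝ)+1))/c) + 1/((k:ℝ)+1)) + 1/((k:ℝ)+1) := by
          have := hdist k
          have := hwd k
          linarith
  · intro k
    have hne : t k ≠ 0 := (htk k).ne'
    have : xb + t k • ((t k)⁻¹ • (u k - xb)) = u k := by
      rw [smul_inv_smul₀ hne]; abel
    rw [this]
    exact huS k

end Aux5
/-- under the quadratic growth condition, the kernel of the second
subderivative equals the tangent cone to `∂φ*(vb)` at `xb`. -/
theorem stmt6 {E : Type*} [NormedAddCommGroup E] [InnerProductSpace ℝ E]
    [FiniteDimensional ℝ E]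
    (φ : E → EReal) (hproper : ProperFn φ) (hconv : ConvexFn φ)
    (xb vb : E) (hsub : vb ∈ subdiff φ xb) (hqg : QuadGrowth φ xb vb) :
    {w | secondSubderiv φ xb vb w = 0} = tanCone (subdiff (conjFn φ) vb) xb := by
  obtain ⟨c, hc, ε, hε, hqg'⟩ := hqg
  have hnt : φ xb ≠ ⊤ := phi_xb_ne_top hproper hsub
  have hnb : φ xb ≠ ⊥ := hproper.1 xb
  obtain ⟨a, ha⟩ : ∃ a : ℝ, φ xb = (a : EReal) :=
    ⟨(φ xb).toReal, (EReal.coe_toReal hnt hnb).symm⟩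
  have hSne : ({u' | vb ∈ subdiff φ u'} : Set E).Nonempty := ⟨xb, hsub⟩
  ext w
  simp only [mem_setOf_eq]
  constructor
  · intro hw
    exact tanCone_mono (S_subset_S' hsub ha) xb (ker_to_tan hsub ha hc hε hqg' hw)
  · intro hw
    obtain ⟨t, wk, ht0, ht, hwk, hmem⟩ := hw
    -- the base points converge to `xb`
    have hxk : Tendsto (fun k => xb + t k • wk k) atTop (𝓝 xb) := by
      have h1 : Tendsto (fun k => t k • wk k) atTop (𝓝 ((0:ℝ) • w)) := ht.smul hwk
      rw [zero_smul] at h1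
      simpa using tendsto_const_nhds.add h1
    have hev : ∀ᶠ k in atTop, dist (xb + t k • wk k) xb < ε :=
      hxk.eventually (Filter.eventually_of_mem (Metric.ball_mem_nhds xb hε)
        (fun y hy => mem_ball.1 hy))
    -- replace by nearby points of S
    have hch : ∀ k, ∃ u, u ∈ {u' | vb ∈ subdiff φ u'} ∧
        (dist (xb + t k • wk k) xb < ε → dist (xb + t k • wk k) u < t k * t k) := by
      intro k
      by_cases hk : dist (xb + t k • wk k) xb < ε
      · have hclos : (xb + t k • wk k) ∈ closure {u' | vb ∈ subdiff φ u'} :=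
          mem_closure_S hsub ha hconv hc hε hqg' (hmem k) hk
        have hlt : infDist (xb + t k • wk k) {u' | vb ∈ subdiff φ u'} < t k * t k := by
          rw [(mem_closure_iff_infDist_zero hSne).1 hclos]
          exact mul_pos (ht0 k) (ht0 k)
        obtain ⟨u, huS, hd⟩ := (infDist_lt_iff hSne).1 hlt
        exact ⟨u, huS, fun _ => hd⟩
      · exact ⟨xb, hsub, fun h => absurd h hk⟩
    choose u huS hud using hch
    apply tanCone_S_subset_ker hsub ha
    refine ⟨t, fun k => (t k)⁻¹ • (u k - xb), ht0, ht, ?_, ?_⟩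
    · -- the modified directions converge to w
      have hdist : ∀ k, dist (xb + t k • wk k) xb < ε →
          dist ((t k)⁻¹ • (u k - xb)) (wk k) < t k := by
        intro k hk
        have hne : t k ≠ 0 := (ht0 k).ne'
        have hsm : (t k) • ((t k)⁻¹ • (u k - xb) - wk k) = u k - (xb + t k • wk k) := by
          rw [smul_sub, smul_inv_smul₀ hne]; abel
        have h5 : t k * ‖(t k)⁻¹ • (u k - xb) - wk k‖ = ‖xb + t k • wk k - u k‖ := by
          calc t k * ‖(t k)⁻¹ • (u k - xb) - wk k‖
              = ‖(t k) • ((t k)⁻¹ • (u k - xb) - wk k)‖ := by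
                rw [norm_smul, Real.norm_eq_abs, abs_of_pos (ht0 k)]
            _ = ‖u k - (xb + t k • wk k)‖ := by rw [hsm]
            _ = ‖xb + t k • wk k - u k‖ := norm_sub_rev _ _
        have hnorm : dist ((t k)⁻¹ • (u k - xb)) (wk k)
            = dist (xb + t k • wk k) (u k) / t k := by
          rw [dist_eq_norm, dist_eq_norm, eq_div_iff hne, mul_comm]
          exact h5
        rw [hnorm, div_lt_iff₀ (ht0 k)]
        calc dist (xb + t k • wk k) (u k) < t k * t k := hud k hk
          _ = t k * t k := rfl
      rw [tendsto_iff_dist_tendsto_zero]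
      have hB : Tendsto (fun k : ℕ => t k + dist (wk k) w) atTop (𝓝 0) := by
        have h2 : Tendsto (fun k : ℕ => dist (wk k) w) atTop (𝓝 0) :=
          tendsto_iff_dist_tendsto_zero.1 hwk
        simpa using ht.add h2
      refine squeeze_zero' (Filter.Eventually.of_forall (fun k => dist_nonneg)) ?_ hB
      filter_upwards [hev] with k hk
      calc dist ((t k)⁻¹ • (u k - xb)) w
          ≤ dist ((t k)⁻¹ • (u k - xb)) (wk k) + dist (wk k) w := dist_triangle _ _ _
        _ ≤ t k + dist (wk k) w := by linarith [hdist k hk]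
    · intro k
      have hne : t k ≠ 0 := (ht0 k).ne'
      have heq : xb + t k • ((t k)⁻¹ • (u k - xb)) = u k := by
        rw [smul_inv_smul₀ hne]; abel
      rw [heq]
      exact huS k
end
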